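/- Let T = U|T| be the polar decomposition of a bounded linear operator on a Hilbert space with U an isometry, and λ ∈ (0,1). If 0 belongs to the approximate point spectrum of Δ_λ(T) = |T|^λ U |T|^{1-λ}, then 0 belongs to the approximate point spectrum of T. -/

import Mathlib

set_option synthInstance.maxHeartbeats 1000000
set_option maxHeartbeats 1000000

/-- The approximate point spectrum of a bounded operator: `μ` such that there exist
unit vectors `x n` with `‖(T - μ) x n‖ → 0`. -/
def approxPointSpectrum {H : Type*} [NormedAddCommGroup H] [InnerProductSpace ℂ H]
    [CompleteSpace H] (T : H →L[ℂ] H) : Set ℂ :=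
  {μ | ∃ x : ℕ → H, (∀ n, ‖x n‖ = 1) ∧
    Filter.Tendsto (fun n => ‖T (x n) - μ • x n‖) Filter.atTop (nhds 0)}

open scoped NNReal

section Aux

variable {H : Type*} [NormedAddCommGroup H] [InnerProductSpace ℂ H] [CompleteSpace H]

/-- If `0` is not in the approximate point spectrum, the operator is bounded below. -/
lemma aux_bounded_below (T : H →L[ℂ] H) (h : (0 : ℂ) ∉ approxPointSpectrum T) :
    ∃ c : ℝ, 0 < c ∧ ∀ y : H, c * ‖y‖ ≤ ‖T y‖ := by
  by_contra hcon
  push_neg at hcon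
  have hsel : ∀ n : ℕ, ∃ y : H, ‖y‖ = 1 ∧ ‖T y‖ < 1 / (n + 1) := by
    intro n
    obtain ⟨y, hy⟩ := hcon (1 / (n + 1)) (by positivity)
    have hy0 : y ≠ 0 := by
      intro h0
      rw [h0] at hy
      simp at hy
    refine ⟨‖y‖⁻¹ • y, ?_, ?_⟩
    · rw [norm_smul]
      simp [norm_pos_iff.mpr hy0, inv_mul_cancel₀ (norm_ne_zero_iff.mpr hy0)]
    · rw [ContinuousLinearMap.map_smul_of_tower, norm_smul]
      simp only [norm_inv, norm_norm]
      rw [inv_mul_lt_iff₀ (norm_pos_iff.mpr hy0)]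
      calc ‖T y‖ < 1 / (n + 1) * ‖y‖ := hy
        _ = ‖y‖ * (1 / (n + 1)) := by ring
  choose x hx1 hx2 using hsel
  apply h
  refine ⟨x, hx1, ?_⟩
  have hT0 : ∀ n, ‖T (x n) - (0 : ℂ) • x n‖ = ‖T (x n)‖ := by intro n; simp
  simp only [hT0]
  apply squeeze_zero (fun n => norm_nonneg _) (fun n => (hx2 n).le)
  exact tendsto_one_div_add_atTop_nhds_zero_nat

lemma aux_re_inner_smul (r : ℝ) (y : H) :
    RCLike.re (inner ℂ (r • y) y : ℂ) = r * ‖y‖ ^ 2 := by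
  rw [RCLike.real_smul_eq_coe_smul (K := ℂ), inner_smul_left, RCLike.conj_ofReal,
    inner_self_eq_norm_sq_to_K]
  rw [← RCLike.ofReal_pow, ← RCLike.ofReal_mul, RCLike.ofReal_re]

/-- A positive operator bounded below has spectrum (over `ℝ≥0`) bounded below. -/
lemma aux_spectrum_bound (R : H →L[ℂ] H) (hR : 0 ≤ R) {c : ℝ} (hc : 0 < c)
    (hb : ∀ y : H, c * ‖y‖ ≤ ‖R y‖) (hnt : ∃ y : H, ‖y‖ = 1) :
    ∃ c' : ℝ≥0, 0 < c' ∧ ∀ x ∈ spectrum ℝ≥0 R, c' ≤ x := by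
  obtain ⟨y₀, hy₀⟩ := hnt
  set S : H →L[ℂ] H := CFC.sqrt R with hSdef
  have hS2 : S * S = R := CFC.sqrt_mul_sqrt_self R hR
  have hSsa : IsSelfAdjoint S := (CFC.sqrt_nonneg (a := R)).isSelfAdjoint
  -- re ⟪R y, y⟫ = ‖S y‖ ^ 2
  have hinner : ∀ y : H, RCLike.re (inner ℂ (R y) y : ℂ) = ‖S y‖ ^ 2 := by
    intro y
    have h1 : R y = S (S y) := by rw [← hS2]; rfl
    rw [h1, ← hSsa.adjoint_eq, ContinuousLinearMap.adjoint_inner_left,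
      hSsa.adjoint_eq, inner_self_eq_norm_sq]
  have hRSS : ∀ y : H, ‖R y‖ ≤ ‖S‖ * ‖S y‖ := by
    intro y
    have h1 : R y = S (S y) := by rw [← hS2]; rfl
    rw [h1]; exact S.le_opNorm _
  have hSpos : 0 < ‖S‖ := by
    rcases le_or_gt ‖S‖ 0 with h | h
    · exfalso
      have := hb y₀
      rw [hy₀, mul_one] at this
      have h2 := (this.trans (hRSS y₀))
      nlinarith [norm_nonneg (S y₀), S.le_opNorm y₀, norm_nonneg S]
    · exact h
  -- lower bound on ‖S y‖
  have hSb : ∀ y : H, (c / ‖S‖) * ‖y‖ ≤ ‖S y‖ := by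
    intro y
    rw [div_mul_eq_mul_div, div_le_iff₀ hSpos]
    calc c * ‖y‖ ≤ ‖R y‖ := hb y
      _ ≤ ‖S‖ * ‖S y‖ := hRSS y
      _ = ‖S y‖ * ‖S‖ := mul_comm _ _
  set c₀ : ℝ := (c / ‖S‖) ^ 2 with hc₀def
  have hc₀ : 0 < c₀ := by positivity
  -- 0 ≤ R - c₀ • 1
  have hpos : (0 : H →L[ℂ] H) ≤ R - algebraMap ℝ (H →L[ℂ] H) c₀ := by
    rw [ContinuousLinearMap.nonneg_iff_isPositive]
    constructor
    · exact ContinuousLinearMap.isSelfAdjoint_iff_isSymmetric.mp ((hR.isSelfAdjoint).sub (IsSelfAdjoint.algebraMap _ (r := c₀) (by simp [IsSelfAdjoint])))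
    · intro y
      have happ : (R - algebraMap ℝ (H →L[ℂ] H) c₀) y = R y - c₀ • y := by
        simp [Algebra.algebraMap_eq_smul_one, ContinuousLinearMap.sub_apply]
      rw [ContinuousLinearMap.reApplyInnerSelf_apply, happ, inner_sub_left, map_sub,
        aux_re_inner_smul, hinner]
      have h2 := hSb y
      have h3 : (c / ‖S‖) ^ 2 * ‖y‖ ^ 2 ≤ ‖S y‖ ^ 2 := by
        rw [← mul_pow]
        apply pow_le_pow_left₀ (by positivity) h2
      rw [hc₀def]
      nlinarith
  refine ⟨Real.toNNReal c₀, Real.toNNReal_pos.mpr hc₀, ?_⟩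
  intro x hx
  have hxR : (x : ℝ) ∈ spectrum ℝ R := by
    rw [← spectrum.algebraMap_mem_iff ℝ] at hx
    exact hx
  have hmem : (x : ℝ) - c₀ ∈ spectrum ℝ (R - algebraMap ℝ (H →L[ℂ] H) c₀) := by
    rw [← spectrum.sub_singleton_eq]
    exact Set.sub_mem_sub hxR rfl
  have h0 : 0 ≤ (x : ℝ) - c₀ := spectrum_nonneg_of_nonneg hpos hmem
  have : c₀ ≤ (x : ℝ) := by linarith
  exact_mod_cast Real.toNNReal_le_iff_le_coe.mpr this

/-- `R ^ a` is bounded below when `R` is positive and bounded below. -/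
lemma aux_rpow_bounded_below (R : H →L[ℂ] H) (hR : 0 ≤ R) {c : ℝ} (hc : 0 < c)
    (hb : ∀ y : H, c * ‖y‖ ≤ ‖R y‖) (hnt : ∃ y : H, ‖y‖ = 1) {a : ℝ} (ha : 0 < a) :
    ∃ d : ℝ, 0 < d ∧ ∀ y : H, d * ‖y‖ ≤ ‖CFC.rpow R a y‖ := by
  obtain ⟨c', hc', hspec⟩ := aux_spectrum_bound R hR hc hb hnt
  set d : ℝ≥0 := c' ^ (a : ℝ) with hd
  have hdpos : 0 < d := NNReal.rpow_pos hc'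
  -- d • 1 ≤ R ^ a
  have hle : algebraMap ℝ≥0 (H →L[ℂ] H) d ≤ CFC.rpow R a := by
    have h1 : CFC.rpow R a = cfc (fun x : ℝ≥0 => x ^ a) R := rfl
    have h2 : algebraMap ℝ≥0 (H →L[ℂ] H) d = cfc (fun _ : ℝ≥0 => d) R :=
      (cfc_const d R hR).symm
    rw [h1, h2]
    apply cfc_mono
    · intro x hx
      exact NNReal.rpow_le_rpow (hspec x hx) ha.le
    · exact continuousOn_const
    · exact (NNReal.continuous_rpow_const ha.le).continuousOn
  refine ⟨d, hdpos, ?_⟩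
  intro y
  rcases eq_or_ne y 0 with rfl | hy0
  · simp
  -- from operator inequality to inner product inequality
  have hpos : (CFC.rpow R a - algebraMap ℝ≥0 (H →L[ℂ] H) d).IsPositive := by
    rw [← ContinuousLinearMap.nonneg_iff_isPositive]
    exact sub_nonneg.mpr hle
  have h3 := hpos.re_inner_nonneg_left y
  have happ : (CFC.rpow R a - algebraMap ℝ≥0 (H →L[ℂ] H) d) y
      = CFC.rpow R a y - (d : ℝ) • y := by
    simp [Algebra.algebraMap_eq_smul_one, ContinuousLinearMap.sub_apply, NNReal.smul_def]
  rw [happ, inner_sub_left, map_sub, aux_re_inner_smul, sub_nonneg] at h3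
  have h4 : (d : ℝ) * ‖y‖ ^ 2 ≤ RCLike.re (inner ℂ (CFC.rpow R a y) y : ℂ) := h3
  have h5 : RCLike.re (inner ℂ (CFC.rpow R a y) y : ℂ) ≤ ‖CFC.rpow R a y‖ * ‖y‖ := by
    calc RCLike.re (inner ℂ (CFC.rpow R a y) y : ℂ)
        ≤ ‖(inner ℂ (CFC.rpow R a y) y : ℂ)‖ := RCLike.re_le_norm _
      _ ≤ ‖CFC.rpow R a y‖ * ‖y‖ := norm_inner_le_norm _ _
  have hyp : 0 < ‖y‖ := norm_pos_iff.mpr hy0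
  have h6 := h4.trans h5
  have h7 : ((d : ℝ) * ‖y‖) * ‖y‖ ≤ ‖CFC.rpow R a y‖ * ‖y‖ := by nlinarith [h6]
  exact le_of_mul_le_mul_right h7 hyp

end Aux

open ContinuousLinearMap in
/-- If `0 ∈ σ_ap(Δ_λ(T))` then `0 ∈ σ_ap(T)`, where `T = U|T|` with `U` an isometry
and `λ ∈ (0,1)`. -/
theorem zero_mem_approxPointSpectrum_of_aluthge {H : Type*} [NormedAddCommGroup H]
    [InnerProductSpace ℂ H] [CompleteSpace H] (T U R : H →L[ℂ] H) (l : ℝ)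
    (hl : l ∈ Set.Ioo (0 : ℝ) 1)
    (hR : 0 ≤ R) (hR2 : R * R = adjoint T * T) (hT : T = U * R)
    (hU : ∀ x : H, ‖U x‖ = ‖x‖)
    (h0 : (0 : ℂ) ∈ approxPointSpectrum (CFC.rpow R l * U * CFC.rpow R (1 - l))) :
    (0 : ℂ) ∈ approxPointSpectrum T := by
  obtain ⟨x, hx1, hx2⟩ := h0
  have hnt : ∃ y : H, ‖y‖ = 1 := ⟨x 0, hx1 0⟩
  by_contra hcon
  obtain ⟨c, hc, hb⟩ := aux_bounded_below T hcon
  -- ‖T y‖ = ‖R y‖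
  have hTR : ∀ y : H, ‖T y‖ = ‖R y‖ := by
    intro y
    rw [hT]
    exact hU (R y)
  have hbR : ∀ y : H, c * ‖y‖ ≤ ‖R y‖ := fun y => (hTR y) ▸ hb y
  obtain ⟨d₁, hd₁, hb₁⟩ := aux_rpow_bounded_below R hR hc hbR hnt hl.1
  obtain ⟨d₂, hd₂, hb₂⟩ := aux_rpow_bounded_below R hR hc hbR hnt (by linarith [hl.2] : (0:ℝ) < 1 - l)
  -- lower bound for the Aluthge transform applied to unit vectors
  have hlb : ∀ n, d₁ * d₂ ≤ ‖(CFC.rpow R l * U * CFC.rpow R (1 - l)) (x n)‖ := by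
    intro n
    have h1 : (CFC.rpow R l * U * CFC.rpow R (1 - l)) (x n)
        = CFC.rpow R l (U (CFC.rpow R (1 - l) (x n))) := rfl
    rw [h1]
    calc d₁ * d₂ = d₁ * (d₂ * ‖x n‖) := by rw [hx1 n, mul_one]
      _ ≤ d₁ * ‖CFC.rpow R (1 - l) (x n)‖ := by
          exact mul_le_mul_of_nonneg_left (hb₂ (x n)) hd₁.le
      _ = d₁ * ‖U (CFC.rpow R (1 - l) (x n))‖ := by rw [hU]
      _ ≤ ‖CFC.rpow R l (U (CFC.rpow R (1 - l) (x n)))‖ := hb₁ _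
  -- contradiction with tendsto 0
  have h2 : ∀ n, ‖(CFC.rpow R l * U * CFC.rpow R (1 - l)) (x n) - (0:ℂ) • x n‖
      = ‖(CFC.rpow R l * U * CFC.rpow R (1 - l)) (x n)‖ := by intro n; simp
  simp only [h2] at hx2
  have := ge_of_tendsto hx2 (Filter.Eventually.of_forall hlb)
  nlinarith
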